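/- Let β ∈ (0,1], τ ∈ ℤ⁺ with τ > 1, and A₀, A₁, Q₀, Q₁ ∈ ℤ⁺. For integers q₀, q₁ define B(q₀,q₁) = {(g₀,g₁) ∈ (1,τ]² : |A₀ g₀ q₀ + A₁ g₁ q₁| < β}, and let B be the union of B(q₀,q₁) over all integer pairs (q₀,q₁) ≠ (0,0) with |q₀| ≤ Q₀ and |q₁| ≤ Q₁. Then the Lebesgue measure of B satisfies 𝓛(B) ≤ 8(τ−1)β · min{Q₁Q₀/A₁, Q₀Q₁/A₀, Q₀τ/A₁, Q₁τ/A₀}. -/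

import Mathlib

open MeasureTheory

open scoped ENNReal

private lemma meas_set (β T a b : ℝ) :
    MeasurableSet {p : ℝ × ℝ | p.1 ∈ Set.Ioc 1 T ∧ p.2 ∈ Set.Ioc 1 T ∧ |a * p.1 + b * p.2| < β} := by
  have h : {p : ℝ × ℝ | p.1 ∈ Set.Ioc 1 T ∧ p.2 ∈ Set.Ioc 1 T ∧ |a * p.1 + b * p.2| < β}
      = (Set.Ioc 1 T ×ˢ Set.Ioc 1 T) ∩ ((fun p : ℝ × ℝ => |a * p.1 + b * p.2|) ⁻¹' Set.Iio β) := by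
    ext p; simp [Set.mem_prod, and_assoc]
  rw [h]
  exact (measurableSet_Ioc.prod measurableSet_Ioc).inter
    ((Continuous.abs (by continuity)).measurable measurableSet_Iio)

private lemma slice_bound (β : ℝ) (hβ : 0 < β) (T : ℝ) (a b : ℝ) (hb : b ≠ 0) :
    volume {p : ℝ × ℝ | p.1 ∈ Set.Ioc 1 T ∧ p.2 ∈ Set.Ioc 1 T ∧ |a * p.1 + b * p.2| < β}
      ≤ ENNReal.ofReal ((T - 1) * (2 * β / |b|)) := by
  set s : Set (ℝ × ℝ) := {p : ℝ × ℝ | p.1 ∈ Set.Ioc 1 T ∧ p.2 ∈ Set.Ioc 1 T ∧ |a * p.1 + b * p.2| < β} with hs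
  have hmeas : MeasurableSet s := meas_set β T a b
  rw [Measure.volume_eq_prod ℝ ℝ, Measure.prod_apply hmeas]
  have hbd : ∀ x : ℝ, volume (Prod.mk x ⁻¹' s) ≤
      (Set.Ioc 1 T).indicator (fun _ => ENNReal.ofReal (2 * β / |b|)) x := by
    intro x
    by_cases hx : x ∈ Set.Ioc 1 T
    · rw [Set.indicator_of_mem hx]
      have hsub : Prod.mk x ⁻¹' s ⊆ Metric.ball (-(a * x) / b) (β / |b|) := by
        intro y hy
        obtain ⟨-, -, h3⟩ := hy
        rw [Metric.mem_ball, Real.dist_eq]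
        have h4 : |y - -(a * x) / b| = |a * x + b * y| / |b| := by
          rw [← abs_div]; congr 1; field_simp; ring
        rw [h4]
        exact (div_lt_div_iff_of_pos_right (abs_pos.2 hb)).mpr h3
      calc volume (Prod.mk x ⁻¹' s) ≤ volume (Metric.ball (-(a * x) / b) (β / |b|)) := measure_mono hsub
        _ = ENNReal.ofReal (2 * (β / |b|)) := Real.volume_ball _ _
        _ = ENNReal.ofReal (2 * β / |b|) := by rw [mul_div_assoc]
    · rw [Set.indicator_of_notMem hx]
      have h5 : Prod.mk x ⁻¹' s = ∅ := by
        ext y; simp only [Set.mem_preimage, Set.mem_empty_iff_false, iff_false]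
        intro hy; exact hx hy.1
      simp [h5]
  calc ∫⁻ x, volume (Prod.mk x ⁻¹' s) ≤ ∫⁻ x, (Set.Ioc 1 T).indicator (fun _ => ENNReal.ofReal (2 * β / |b|)) x :=
        lintegral_mono hbd
    _ = ENNReal.ofReal (2 * β / |b|) * volume (Set.Ioc 1 T) := by
        rw [lintegral_indicator measurableSet_Ioc _, setLIntegral_const]
    _ ≤ ENNReal.ofReal ((T - 1) * (2 * β / |b|)) := by
        rw [Real.volume_Ioc, ← ENNReal.ofReal_mul (by positivity), mul_comm]

private lemma slice_bound' (β : ℝ) (hβ : 0 < β) (T : ℝ) (a b : ℝ) (ha : a ≠ 0) :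
    volume {p : ℝ × ℝ | p.1 ∈ Set.Ioc 1 T ∧ p.2 ∈ Set.Ioc 1 T ∧ |a * p.1 + b * p.2| < β}
      ≤ ENNReal.ofReal ((T - 1) * (2 * β / |a|)) := by
  have hswap : {p : ℝ × ℝ | p.1 ∈ Set.Ioc 1 T ∧ p.2 ∈ Set.Ioc 1 T ∧ |a * p.1 + b * p.2| < β}
      = Prod.swap ⁻¹' {p : ℝ × ℝ | p.1 ∈ Set.Ioc 1 T ∧ p.2 ∈ Set.Ioc 1 T ∧ |b * p.1 + a * p.2| < β} := by
    ext p
    simp only [Set.mem_preimage, Set.mem_setOf_eq, Prod.fst_swap, Prod.snd_swap]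
    constructor
    · rintro ⟨h1, h2, h3⟩; exact ⟨h2, h1, by rwa [add_comm]⟩
    · rintro ⟨h1, h2, h3⟩; exact ⟨h2, h1, by rwa [add_comm]⟩
  have hpres := (Measure.measurePreserving_swap (μ := (volume : Measure ℝ)) (ν := (volume : Measure ℝ))).measure_preimage
      (meas_set β T b a).nullMeasurableSet
  rw [hswap, Measure.volume_eq_prod ℝ ℝ, hpres, ← Measure.volume_eq_prod ℝ ℝ]
  exact slice_bound β hβ T b a ha

private lemma Bset_eq (β T : ℝ) (A0 A1 : ℕ) (q0 q1 : ℤ) :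
    {p : ℝ × ℝ | p.1 ∈ Set.Ioc 1 T ∧ p.2 ∈ Set.Ioc 1 T ∧
        |(A0 : ℝ) * p.1 * q0 + (A1 : ℝ) * p.2 * q1| < β}
      = {p : ℝ × ℝ | p.1 ∈ Set.Ioc 1 T ∧ p.2 ∈ Set.Ioc 1 T ∧
        |((A0 : ℝ) * q0) * p.1 + ((A1 : ℝ) * q1) * p.2| < β} := by
  ext p
  rw [Set.mem_setOf_eq, Set.mem_setOf_eq,
    show (A0 : ℝ) * p.1 * q0 + (A1 : ℝ) * p.2 * q1
      = ((A0 : ℝ) * q0) * p.1 + ((A1 : ℝ) * q1) * p.2 from by ring]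

private lemma Bvol1 (β : ℝ) (hβ : 0 < β) (T : ℝ) (A0 A1 : ℕ) (q0 q1 : ℤ)
    (hA1 : 0 < A1) (hq1 : q1 ≠ 0) :
    volume {p : ℝ × ℝ | p.1 ∈ Set.Ioc 1 T ∧ p.2 ∈ Set.Ioc 1 T ∧
        |(A0 : ℝ) * p.1 * q0 + (A1 : ℝ) * p.2 * q1| < β}
      ≤ ENNReal.ofReal ((T - 1) * (2 * β / ((A1 : ℝ) * |(q1 : ℝ)|))) := by
  rw [Bset_eq]
  have hb : (A1 : ℝ) * (q1 : ℝ) ≠ 0 :=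
    mul_ne_zero (Nat.cast_ne_zero.2 hA1.ne') (Int.cast_ne_zero.2 hq1)
  have := slice_bound β hβ T ((A0 : ℝ) * q0) ((A1 : ℝ) * q1) hb
  rwa [abs_mul, Nat.abs_cast] at this

private lemma Bvol0 (β : ℝ) (hβ : 0 < β) (T : ℝ) (A0 A1 : ℕ) (q0 q1 : ℤ)
    (hA0 : 0 < A0) (hq0 : q0 ≠ 0) :
    volume {p : ℝ × ℝ | p.1 ∈ Set.Ioc 1 T ∧ p.2 ∈ Set.Ioc 1 T ∧
        |(A0 : ℝ) * p.1 * q0 + (A1 : ℝ) * p.2 * q1| < β}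
      ≤ ENNReal.ofReal ((T - 1) * (2 * β / ((A0 : ℝ) * |(q0 : ℝ)|))) := by
  rw [Bset_eq]
  have ha : (A0 : ℝ) * (q0 : ℝ) ≠ 0 :=
    mul_ne_zero (Nat.cast_ne_zero.2 hA0.ne') (Int.cast_ne_zero.2 hq0)
  have := slice_bound' β hβ T ((A0 : ℝ) * q0) ((A1 : ℝ) * q1) ha
  rwa [abs_mul, Nat.abs_cast] at this

private lemma Bne1 (β : ℝ) (hβ1 : β ≤ 1) (τ A0 A1 : ℕ) (hτ : 1 ≤ τ) (q0 q1 : ℤ)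
    (hne : Set.Nonempty {p : ℝ × ℝ | p.1 ∈ Set.Ioc 1 (τ : ℝ) ∧ p.2 ∈ Set.Ioc 1 (τ : ℝ) ∧
        |(A0 : ℝ) * p.1 * q0 + (A1 : ℝ) * p.2 * q1| < β}) :
    (A1 : ℤ) * |q1| ≤ (A0 : ℤ) * |q0| * (τ : ℤ) := by
  obtain ⟨⟨g0, g1⟩, hg0, hg1, habs⟩ := hne
  simp only at hg0 hg1 habs
  obtain ⟨hg01, hg0τ⟩ := hg0
  obtain ⟨hg11, hg1τ⟩ := hg1
  have hg0p : (0:ℝ) ≤ g0 := by linarith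
  have hg1p : (0:ℝ) ≤ g1 := by linarith
  set u : ℝ := (A0 : ℝ) * g0 * q0
  set v : ℝ := (A1 : ℝ) * g1 * q1
  have e1 : |v| = (A1 : ℝ) * g1 * |(q1 : ℝ)| := by
    rw [abs_mul, abs_of_nonneg (mul_nonneg (Nat.cast_nonneg _) hg1p)]
  have e0 : |u| = (A0 : ℝ) * g0 * |(q0 : ℝ)| := by
    rw [abs_mul, abs_of_nonneg (mul_nonneg (Nat.cast_nonneg _) hg0p)]
  have t : |v| ≤ |u + v| + |u| := by
    calc |v| = |(u + v) + (-u)| := by congr 1; ring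
      _ ≤ |u + v| + |-u| := abs_add_le _ _
      _ = |u + v| + |u| := by rw [abs_neg]
  have hq1a : (0:ℝ) ≤ |(q1 : ℝ)| := abs_nonneg _
  have hq0a : (0:ℝ) ≤ |(q0 : ℝ)| := abs_nonneg _
  have hA1r : (0:ℝ) ≤ (A1 : ℝ) := Nat.cast_nonneg _
  have hA0r : (0:ℝ) ≤ (A0 : ℝ) := Nat.cast_nonneg _
  have key : (A1 : ℝ) * |(q1 : ℝ)| < (A0 : ℝ) * |(q0 : ℝ)| * (τ : ℝ) + 1 := by
    nlinarith [mul_nonneg hA1r hq1a, mul_nonneg hA0r hq0a]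
  have : ((A1 * |q1| : ℤ) : ℝ) < ((A0 * |q0| * (τ : ℤ) : ℤ) : ℝ) + 1 := by
    push_cast
    convert key using 2 <;> ring
  exact Int.lt_add_one_iff.mp (by exact_mod_cast this)

private lemma Bne0 (β : ℝ) (hβ1 : β ≤ 1) (τ A0 A1 : ℕ) (hτ : 1 ≤ τ) (q0 q1 : ℤ)
    (hne : Set.Nonempty {p : ℝ × ℝ | p.1 ∈ Set.Ioc 1 (τ : ℝ) ∧ p.2 ∈ Set.Ioc 1 (τ : ℝ) ∧
        |(A0 : ℝ) * p.1 * q0 + (A1 : ℝ) * p.2 * q1| < β}) :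
    (A0 : ℤ) * |q0| ≤ (A1 : ℤ) * |q1| * (τ : ℤ) := by
  obtain ⟨⟨g0, g1⟩, hg0, hg1, habs⟩ := hne
  simp only at hg0 hg1 habs
  obtain ⟨hg01, hg0τ⟩ := hg0
  obtain ⟨hg11, hg1τ⟩ := hg1
  have hg0p : (0:ℝ) ≤ g0 := by linarith
  have hg1p : (0:ℝ) ≤ g1 := by linarith
  set u : ℝ := (A0 : ℝ) * g0 * q0
  set v : ℝ := (A1 : ℝ) * g1 * q1
  have e1 : |v| = (A1 : ℝ) * g1 * |(q1 : ℝ)| := by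
    rw [abs_mul, abs_of_nonneg (mul_nonneg (Nat.cast_nonneg _) hg1p)]
  have e0 : |u| = (A0 : ℝ) * g0 * |(q0 : ℝ)| := by
    rw [abs_mul, abs_of_nonneg (mul_nonneg (Nat.cast_nonneg _) hg0p)]
  have t : |u| ≤ |u + v| + |v| := by
    calc |u| = |(u + v) + (-v)| := by congr 1; ring
      _ ≤ |u + v| + |-v| := abs_add_le _ _
      _ = |u + v| + |v| := by rw [abs_neg]
  have hq1a : (0:ℝ) ≤ |(q1 : ℝ)| := abs_nonneg _
  have hq0a : (0:ℝ) ≤ |(q0 : ℝ)| := abs_nonneg _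
  have hA1r : (0:ℝ) ≤ (A1 : ℝ) := Nat.cast_nonneg _
  have hA0r : (0:ℝ) ≤ (A0 : ℝ) := Nat.cast_nonneg _
  have key : (A0 : ℝ) * |(q0 : ℝ)| < (A1 : ℝ) * |(q1 : ℝ)| * (τ : ℝ) + 1 := by
    nlinarith [mul_nonneg hA1r hq1a, mul_nonneg hA0r hq0a]
  have : ((A0 * |q0| : ℤ) : ℝ) < ((A1 * |q1| * (τ : ℤ) : ℤ) : ℝ) + 1 := by
    push_cast
    convert key using 2 <;> ring
  exact Int.lt_add_one_iff.mp (by exact_mod_cast this)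

set_option maxHeartbeats 2000000 in
theorem stmt_0 (β : ℝ) (hβ0 : 0 < β) (hβ1 : β ≤ 1)
    (τ : ℕ) (hτ : 1 < τ)
    (A0 A1 Q0 Q1 : ℕ) (hA0 : 0 < A0) (hA1 : 0 < A1) (hQ0 : 0 < Q0) (hQ1 : 0 < Q1) :
    volume (⋃ (q0 : ℤ) (q1 : ℤ) (_ : (q0, q1) ≠ (0, 0) ∧ |q0| ≤ (Q0 : ℤ) ∧ |q1| ≤ (Q1 : ℤ)),
        {p : ℝ × ℝ | p.1 ∈ Set.Ioc 1 (τ : ℝ) ∧ p.2 ∈ Set.Ioc 1 (τ : ℝ) ∧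
          |(A0 : ℝ) * p.1 * q0 + (A1 : ℝ) * p.2 * q1| < β})
      ≤ ENNReal.ofReal (8 * ((τ : ℝ) - 1) * β *
          min (min ((Q1 : ℝ) * Q0 / A1) ((Q0 : ℝ) * Q1 / A0))
              (min ((Q0 : ℝ) * τ / A1) ((Q1 : ℝ) * τ / A0))) := by
  have hτR : (1:ℝ) < (τ : ℝ) := by exact_mod_cast hτ
  have hA0R : (1:ℝ) ≤ (A0 : ℝ) := by exact_mod_cast hA0
  have hA1R : (1:ℝ) ≤ (A1 : ℝ) := by exact_mod_cast hA1
  set B : ℤ × ℤ → Set (ℝ × ℝ) := fun q =>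
    {p : ℝ × ℝ | p.1 ∈ Set.Ioc 1 (τ : ℝ) ∧ p.2 ∈ Set.Ioc 1 (τ : ℝ) ∧
      |(A0 : ℝ) * p.1 * q.1 + (A1 : ℝ) * p.2 * q.2| < β} with hBdef
  set S0 : Finset ℤ := (Finset.Icc (-(Q0 : ℤ)) (Q0 : ℤ)).erase 0 with hS0def
  set S1 : Finset ℤ := (Finset.Icc (-(Q1 : ℤ)) (Q1 : ℤ)).erase 0 with hS1def
  have hmemS0 : ∀ q0 : ℤ, q0 ∈ S0 ↔ q0 ≠ 0 ∧ |q0| ≤ (Q0 : ℤ) := by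
    intro q0; simp [hS0def, Finset.mem_erase, Finset.mem_Icc, abs_le]
  have hmemS1 : ∀ q1 : ℤ, q1 ∈ S1 ↔ q1 ≠ 0 ∧ |q1| ≤ (Q1 : ℤ) := by
    intro q1; simp [hS1def, Finset.mem_erase, Finset.mem_Icc, abs_le]
  have hcard0 : S0.card = 2 * Q0 := by
    rw [hS0def, Finset.card_erase_of_mem (by simp), Int.card_Icc]; omega
  have hcard1 : S1.card = 2 * Q1 := by
    rw [hS1def, Finset.card_erase_of_mem (by simp), Int.card_Icc]; omega
  -- Step 1: the union is contained in the finite union over S0 ×ˢ S1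
  have hsub : (⋃ (q0 : ℤ) (q1 : ℤ) (_ : (q0, q1) ≠ (0, 0) ∧ |q0| ≤ (Q0 : ℤ) ∧ |q1| ≤ (Q1 : ℤ)),
        {p : ℝ × ℝ | p.1 ∈ Set.Ioc 1 (τ : ℝ) ∧ p.2 ∈ Set.Ioc 1 (τ : ℝ) ∧
          |(A0 : ℝ) * p.1 * q0 + (A1 : ℝ) * p.2 * q1| < β})
      ⊆ ⋃ q ∈ (S0 ×ˢ S1 : Finset (ℤ × ℤ)), B q := by
    intro p hp
    simp only [Set.mem_iUnion] at hp
    obtain ⟨q0, q1, ⟨hne, hb0, hb1⟩, hpB⟩ := hp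
    obtain ⟨hp1, hp2, habs⟩ := hpB
    have hp1' : 1 < p.1 := hp1.1
    have hp2' : 1 < p.2 := hp2.1
    have habs1 : ∀ z : ℤ, z ≠ 0 → (1:ℝ) ≤ |(z : ℝ)| := by
      intro z hz
      have : (1:ℤ) ≤ |z| := Int.one_le_abs hz
      calc (1:ℝ) ≤ ((|z| : ℤ) : ℝ) := by exact_mod_cast this
        _ = |(z : ℝ)| := by push_cast; ring
    have hq0 : q0 ≠ 0 := by
      rintro rfl
      have hq1 : q1 ≠ 0 := by simpa using hne
      have h1 : (1:ℝ) ≤ |(q1 : ℝ)| := habs1 q1 hq1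
      have e : |(A0 : ℝ) * p.1 * (0:ℤ) + (A1 : ℝ) * p.2 * q1| = (A1 : ℝ) * p.2 * |(q1 : ℝ)| := by
        push_cast
        rw [mul_zero, zero_add, abs_mul,
          abs_of_nonneg (mul_nonneg (Nat.cast_nonneg _) (by linarith : (0:ℝ) ≤ p.2))]
      rw [e] at habs
      have ha : (1:ℝ) < (A1:ℝ) * p.2 := by
        nlinarith [mul_nonneg (sub_nonneg.2 hA1R) (le_of_lt (lt_trans zero_lt_one hp2'))]
      have hb : (A1:ℝ) * p.2 ≤ (A1:ℝ) * p.2 * |(q1:ℝ)| := by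
        nlinarith [mul_nonneg (le_of_lt (lt_trans zero_lt_one ha)) (sub_nonneg.2 h1)]
      linarith
    have hq1 : q1 ≠ 0 := by
      rintro rfl
      have h1 : (1:ℝ) ≤ |(q0 : ℝ)| := habs1 q0 hq0
      have e : |(A0 : ℝ) * p.1 * q0 + (A1 : ℝ) * p.2 * (0:ℤ)| = (A0 : ℝ) * p.1 * |(q0 : ℝ)| := by
        push_cast
        rw [mul_zero, add_zero, abs_mul,
          abs_of_nonneg (mul_nonneg (Nat.cast_nonneg _) (by linarith : (0:ℝ) ≤ p.1))]
      rw [e] at habs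
      have ha : (1:ℝ) < (A0:ℝ) * p.1 := by
        nlinarith [mul_nonneg (sub_nonneg.2 hA0R) (le_of_lt (lt_trans zero_lt_one hp1'))]
      have hb : (A0:ℝ) * p.1 ≤ (A0:ℝ) * p.1 * |(q0:ℝ)| := by
        nlinarith [mul_nonneg (le_of_lt (lt_trans zero_lt_one ha)) (sub_nonneg.2 h1)]
      linarith
    exact Set.mem_iUnion₂.mpr ⟨(q0, q1),
      Finset.mem_product.mpr ⟨(hmemS0 q0).2 ⟨hq0, hb0⟩, (hmemS1 q1).2 ⟨hq1, hb1⟩⟩,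
      ⟨hp1, hp2, habs⟩⟩
  refine le_trans (measure_mono hsub) (le_trans (measure_biUnion_finset_le _ _) ?_)
  -- abbreviations
  have hone : ∀ z : ℤ, z ≠ 0 → (1:ℝ) ≤ |(z : ℝ)| := by
    intro z hz
    have h : (1:ℤ) ≤ |z| := Int.one_le_abs hz
    calc (1:ℝ) ≤ ((|z| : ℤ) : ℝ) := by exact_mod_cast h
      _ = |(z : ℝ)| := by push_cast; ring
  have hA1Z : (0:ℤ) < (A1:ℤ) := by exact_mod_cast hA1
  have hA0Z : (0:ℤ) < (A0:ℤ) := by exact_mod_cast hA0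
  -- bound (a)
  have bndA : ∑ q ∈ S0 ×ˢ S1, volume (B q)
      ≤ ENNReal.ofReal (8 * ((τ : ℝ) - 1) * β * ((Q1 : ℝ) * Q0 / A1)) := by
    have hterm : ∀ q ∈ S0 ×ˢ S1, volume (B q)
        ≤ ENNReal.ofReal (((τ:ℝ) - 1) * (2 * β / (A1:ℝ))) := by
      rintro ⟨q0, q1⟩ hq
      rw [Finset.mem_product] at hq
      have hq1ne : q1 ≠ 0 := ((hmemS1 q1).1 hq.2).1
      have h1 : (1:ℝ) ≤ |(q1:ℝ)| := hone q1 hq1ne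
      refine (Bvol1 β hβ0 (τ:ℝ) A0 A1 q0 q1 hA1 hq1ne).trans (ENNReal.ofReal_le_ofReal ?_)
      have hd : (A1:ℝ) ≤ (A1:ℝ) * |(q1:ℝ)| := by nlinarith
      gcongr
    calc ∑ q ∈ S0 ×ˢ S1, volume (B q)
        ≤ ∑ _q ∈ S0 ×ˢ S1, ENNReal.ofReal (((τ:ℝ) - 1) * (2 * β / (A1:ℝ))) :=
          Finset.sum_le_sum hterm
      _ = (S0 ×ˢ S1).card • ENNReal.ofReal (((τ:ℝ) - 1) * (2 * β / (A1:ℝ))) :=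
          Finset.sum_const _
      _ ≤ ENNReal.ofReal (8 * ((τ : ℝ) - 1) * β * ((Q1 : ℝ) * Q0 / A1)) := by
          rw [Finset.card_product, hcard0, hcard1, nsmul_eq_mul, ← ENNReal.ofReal_natCast,
            ← ENNReal.ofReal_mul (Nat.cast_nonneg _)]
          refine ENNReal.ofReal_le_ofReal (le_of_eq ?_)
          push_cast
          field_simp
          ring
  -- bound (b)
  have bndB : ∑ q ∈ S0 ×ˢ S1, volume (B q)
      ≤ ENNReal.ofReal (8 * ((τ : ℝ) - 1) * β * ((Q0 : ℝ) * Q1 / A0)) := by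
    have hterm : ∀ q ∈ S0 ×ˢ S1, volume (B q)
        ≤ ENNReal.ofReal (((τ:ℝ) - 1) * (2 * β / (A0:ℝ))) := by
      rintro ⟨q0, q1⟩ hq
      rw [Finset.mem_product] at hq
      have hq0ne : q0 ≠ 0 := ((hmemS0 q0).1 hq.1).1
      have h1 : (1:ℝ) ≤ |(q0:ℝ)| := hone q0 hq0ne
      refine (Bvol0 β hβ0 (τ:ℝ) A0 A1 q0 q1 hA0 hq0ne).trans (ENNReal.ofReal_le_ofReal ?_)
      have hd : (A0:ℝ) ≤ (A0:ℝ) * |(q0:ℝ)| := by nlinarith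
      gcongr
    calc ∑ q ∈ S0 ×ˢ S1, volume (B q)
        ≤ ∑ _q ∈ S0 ×ˢ S1, ENNReal.ofReal (((τ:ℝ) - 1) * (2 * β / (A0:ℝ))) :=
          Finset.sum_le_sum hterm
      _ = (S0 ×ˢ S1).card • ENNReal.ofReal (((τ:ℝ) - 1) * (2 * β / (A0:ℝ))) :=
          Finset.sum_const _
      _ ≤ ENNReal.ofReal (8 * ((τ : ℝ) - 1) * β * ((Q0 : ℝ) * Q1 / A0)) := by
          rw [Finset.card_product, hcard0, hcard1, nsmul_eq_mul, ← ENNReal.ofReal_natCast,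
            ← ENNReal.ofReal_mul (Nat.cast_nonneg _)]
          refine ENNReal.ofReal_le_ofReal (le_of_eq ?_)
          push_cast
          field_simp
          ring
  -- bound (c)
  have innerC : ∀ q0 ∈ S0, ∑ q1 ∈ S1, volume (B (q0, q1))
      ≤ ENNReal.ofReal (4 * (τ:ℝ) * ((τ:ℝ) - 1) * β / (A1:ℝ)) := by
    intro q0 hq0m
    have hq0ne : q0 ≠ 0 := ((hmemS0 q0).1 hq0m).1
    have habsq0 : (1:ℝ) ≤ |(q0:ℝ)| := hone q0 hq0ne
    have habsq0' : (0:ℝ) < (A0:ℝ) * |(q0:ℝ)| := by nlinarith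
    obtain ⟨N, hNdef⟩ : ∃ N : ℤ, N = (A0:ℤ) * |q0| * (τ:ℤ) := ⟨_, rfl⟩
    obtain ⟨M, hMdef⟩ : ∃ M : ℤ, M = N / (A1:ℤ) := ⟨_, rfl⟩
    have hN0 : 0 ≤ N := by rw [hNdef]; exact mul_nonneg (mul_nonneg hA0Z.le (abs_nonneg _)) (by positivity)
    have hM0 : 0 ≤ M := by rw [hMdef]; exact Int.ediv_nonneg hN0 hA1Z.le
    have hMle : (M:ℝ) * (A1:ℝ) ≤ (N:ℝ) := by rw [hMdef]; exact_mod_cast Int.ediv_mul_le N hA1Z.ne'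
    obtain ⟨c0, hc0def⟩ : ∃ c0 : ℝ≥0∞, c0 = ENNReal.ofReal (((τ:ℝ) - 1) * (2 * β / ((A0:ℝ) * |(q0:ℝ)|))) := ⟨_, rfl⟩
    have hterm : ∀ q1 ∈ S1, volume (B (q0, q1))
        ≤ (if (A1:ℤ) * |q1| ≤ N then c0 else 0) := by
      intro q1 _hq1m
      by_cases h : (A1:ℤ) * |q1| ≤ N
      · rw [if_pos h, hc0def]
        exact Bvol0 β hβ0 (τ:ℝ) A0 A1 q0 q1 hA0 hq0ne
      · rw [if_neg h]
        rw [hNdef] at h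
        rcases Set.eq_empty_or_nonempty (B (q0, q1)) with he | hne'
        · rw [he]; simp
        · exact absurd (Bne1 β hβ1 τ A0 A1 hτ.le q0 q1 hne') h
    calc ∑ q1 ∈ S1, volume (B (q0, q1))
        ≤ ∑ q1 ∈ S1, (if (A1:ℤ) * |q1| ≤ N then c0 else 0) := Finset.sum_le_sum hterm
      _ = ∑ _q1 ∈ S1.filter (fun q1 => (A1:ℤ) * |q1| ≤ N), c0 := (Finset.sum_filter _ _).symm
      _ = (S1.filter (fun q1 => (A1:ℤ) * |q1| ≤ N)).card • c0 := Finset.sum_const _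
      _ ≤ (2 * M).toNat • c0 := by
          have hsub2 : S1.filter (fun q1 => (A1:ℤ) * |q1| ≤ N) ⊆ (Finset.Icc (-M) M).erase 0 := by
            intro x hx
            rw [Finset.mem_filter] at hx
            have hxne : x ≠ 0 := ((hmemS1 x).1 hx.1).1
            have hxM : |x| ≤ M := by
              rw [hMdef, Int.le_ediv_iff_mul_le hA1Z, mul_comm]
              exact hx.2
            rw [Finset.mem_erase, Finset.mem_Icc]
            have := abs_le.mp hxM
            exact ⟨hxne, this.1, this.2⟩
          have hcardle : (S1.filter (fun q1 => (A1:ℤ) * |q1| ≤ N)).card ≤ (2 * M).toNat := by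
            calc _ ≤ ((Finset.Icc (-M) M).erase 0).card := Finset.card_le_card hsub2
              _ ≤ (2 * M).toNat := by
                  rw [Finset.card_erase_of_mem (by rw [Finset.mem_Icc]; omega), Int.card_Icc]
                  omega
          simp only [nsmul_eq_mul]
          exact mul_le_mul_left (Nat.cast_le.mpr hcardle) _
      _ ≤ ENNReal.ofReal (4 * (τ:ℝ) * ((τ:ℝ) - 1) * β / (A1:ℝ)) := by
          rw [hc0def, nsmul_eq_mul, ← ENNReal.ofReal_natCast, ← ENNReal.ofReal_mul (Nat.cast_nonneg _)]
          refine ENNReal.ofReal_le_ofReal ?_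
          have h2M : (((2 * M).toNat : ℕ) : ℝ) = 2 * (M:ℝ) := by
            have h' : (0:ℤ) ≤ 2 * M := by omega
            exact_mod_cast congrArg (fun z : ℤ => (z : ℝ)) (Int.toNat_of_nonneg h')
          rw [h2M]
          have hAq : ((A0:ℝ) * |(q0:ℝ)|) ≠ 0 := ne_of_gt habsq0'
          have hMr : (M:ℝ) ≤ (A0:ℝ) * |(q0:ℝ)| * (τ:ℝ) / (A1:ℝ) := by
            rw [le_div_iff₀ (by positivity)]
            calc (M:ℝ) * (A1:ℝ) ≤ (N:ℝ) := hMle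
              _ = (A0:ℝ) * |(q0:ℝ)| * (τ:ℝ) := by rw [hNdef]; push_cast; ring
          calc 2 * (M:ℝ) * (((τ:ℝ) - 1) * (2 * β / ((A0:ℝ) * |(q0:ℝ)|)))
              = 4 * β * ((τ:ℝ) - 1) * ((M:ℝ) * ((A0:ℝ) * |(q0:ℝ)|)⁻¹) := by ring
            _ ≤ 4 * β * ((τ:ℝ) - 1) *
                (((A0:ℝ) * |(q0:ℝ)| * (τ:ℝ) / (A1:ℝ)) * ((A0:ℝ) * |(q0:ℝ)|)⁻¹) := by
                refine mul_le_mul_of_nonneg_left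
                  (mul_le_mul_of_nonneg_right hMr (by positivity)) (by nlinarith)
            _ = 4 * (τ:ℝ) * ((τ:ℝ) - 1) * β / (A1:ℝ) := by
                field_simp
  have bndC : ∑ q ∈ S0 ×ˢ S1, volume (B q)
      ≤ ENNReal.ofReal (8 * ((τ : ℝ) - 1) * β * ((Q0 : ℝ) * τ / A1)) := by
    rw [Finset.sum_product]
    calc ∑ q0 ∈ S0, ∑ q1 ∈ S1, volume (B (q0, q1))
        ≤ ∑ _q0 ∈ S0, ENNReal.ofReal (4 * (τ:ℝ) * ((τ:ℝ) - 1) * β / (A1:ℝ)) :=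
          Finset.sum_le_sum innerC
      _ = S0.card • ENNReal.ofReal (4 * (τ:ℝ) * ((τ:ℝ) - 1) * β / (A1:ℝ)) := Finset.sum_const _
      _ ≤ ENNReal.ofReal (8 * ((τ : ℝ) - 1) * β * ((Q0 : ℝ) * τ / A1)) := by
          rw [hcard0, nsmul_eq_mul, ← ENNReal.ofReal_natCast, ← ENNReal.ofReal_mul (Nat.cast_nonneg _)]
          refine ENNReal.ofReal_le_ofReal (le_of_eq ?_)
          push_cast
          field_simp
          ring
  -- bound (d)
  have innerD : ∀ q1 ∈ S1, ∑ q0 ∈ S0, volume (B (q0, q1))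
      ≤ ENNReal.ofReal (4 * (τ:ℝ) * ((τ:ℝ) - 1) * β / (A0:ℝ)) := by
    intro q1 hq1m
    have hq1ne : q1 ≠ 0 := ((hmemS1 q1).1 hq1m).1
    have habsq1 : (1:ℝ) ≤ |(q1:ℝ)| := hone q1 hq1ne
    have habsq1' : (0:ℝ) < (A1:ℝ) * |(q1:ℝ)| := by nlinarith
    obtain ⟨N, hNdef⟩ : ∃ N : ℤ, N = (A1:ℤ) * |q1| * (τ:ℤ) := ⟨_, rfl⟩
    obtain ⟨M, hMdef⟩ : ∃ M : ℤ, M = N / (A0:ℤ) := ⟨_, rfl⟩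
    have hN0 : 0 ≤ N := by rw [hNdef]; exact mul_nonneg (mul_nonneg hA1Z.le (abs_nonneg _)) (by positivity)
    have hM0 : 0 ≤ M := by rw [hMdef]; exact Int.ediv_nonneg hN0 hA0Z.le
    have hMle : (M:ℝ) * (A0:ℝ) ≤ (N:ℝ) := by rw [hMdef]; exact_mod_cast Int.ediv_mul_le N hA0Z.ne'
    obtain ⟨c0, hc0def⟩ : ∃ c0 : ℝ≥0∞, c0 = ENNReal.ofReal (((τ:ℝ) - 1) * (2 * β / ((A1:ℝ) * |(q1:ℝ)|))) := ⟨_, rfl⟩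
    have hterm : ∀ q0 ∈ S0, volume (B (q0, q1))
        ≤ (if (A0:ℤ) * |q0| ≤ N then c0 else 0) := by
      intro q0 _hq0m
      by_cases h : (A0:ℤ) * |q0| ≤ N
      · rw [if_pos h, hc0def]
        exact Bvol1 β hβ0 (τ:ℝ) A0 A1 q0 q1 hA1 hq1ne
      · rw [if_neg h]
        rw [hNdef] at h
        rcases Set.eq_empty_or_nonempty (B (q0, q1)) with he | hne'
        · rw [he]; simp
        · exact absurd (Bne0 β hβ1 τ A0 A1 hτ.le q0 q1 hne') h
    calc ∑ q0 ∈ S0, volume (B (q0, q1))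
        ≤ ∑ q0 ∈ S0, (if (A0:ℤ) * |q0| ≤ N then c0 else 0) := Finset.sum_le_sum hterm
      _ = ∑ _q0 ∈ S0.filter (fun q0 => (A0:ℤ) * |q0| ≤ N), c0 := (Finset.sum_filter _ _).symm
      _ = (S0.filter (fun q0 => (A0:ℤ) * |q0| ≤ N)).card • c0 := Finset.sum_const _
      _ ≤ (2 * M).toNat • c0 := by
          have hsub2 : S0.filter (fun q0 => (A0:ℤ) * |q0| ≤ N) ⊆ (Finset.Icc (-M) M).erase 0 := by
            intro x hx
            rw [Finset.mem_filter] at hx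
            have hxne : x ≠ 0 := ((hmemS0 x).1 hx.1).1
            have hxM : |x| ≤ M := by
              rw [hMdef, Int.le_ediv_iff_mul_le hA0Z, mul_comm]
              exact hx.2
            rw [Finset.mem_erase, Finset.mem_Icc]
            have := abs_le.mp hxM
            exact ⟨hxne, this.1, this.2⟩
          have hcardle : (S0.filter (fun q0 => (A0:ℤ) * |q0| ≤ N)).card ≤ (2 * M).toNat := by
            calc _ ≤ ((Finset.Icc (-M) M).erase 0).card := Finset.card_le_card hsub2
              _ ≤ (2 * M).toNat := by
                  rw [Finset.card_erase_of_mem (by rw [Finset.mem_Icc]; omega), Int.card_Icc]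
                  omega
          simp only [nsmul_eq_mul]
          exact mul_le_mul_left (Nat.cast_le.mpr hcardle) _
      _ ≤ ENNReal.ofReal (4 * (τ:ℝ) * ((τ:ℝ) - 1) * β / (A0:ℝ)) := by
          rw [hc0def, nsmul_eq_mul, ← ENNReal.ofReal_natCast, ← ENNReal.ofReal_mul (Nat.cast_nonneg _)]
          refine ENNReal.ofReal_le_ofReal ?_
          have h2M : (((2 * M).toNat : ℕ) : ℝ) = 2 * (M:ℝ) := by
            have h' : (0:ℤ) ≤ 2 * M := by omega
            exact_mod_cast congrArg (fun z : ℤ => (z : ℝ)) (Int.toNat_of_nonneg h')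
          rw [h2M]
          have hAq : ((A1:ℝ) * |(q1:ℝ)|) ≠ 0 := ne_of_gt habsq1'
          have hMr : (M:ℝ) ≤ (A1:ℝ) * |(q1:ℝ)| * (τ:ℝ) / (A0:ℝ) := by
            rw [le_div_iff₀ (by positivity)]
            calc (M:ℝ) * (A0:ℝ) ≤ (N:ℝ) := hMle
              _ = (A1:ℝ) * |(q1:ℝ)| * (τ:ℝ) := by rw [hNdef]; push_cast; ring
          calc 2 * (M:ℝ) * (((τ:ℝ) - 1) * (2 * β / ((A1:ℝ) * |(q1:ℝ)|)))
              = 4 * β * ((τ:ℝ) - 1) * ((M:ℝ) * ((A1:ℝ) * |(q1:ℝ)|)⁻¹) := by ring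
            _ ≤ 4 * β * ((τ:ℝ) - 1) *
                (((A1:ℝ) * |(q1:ℝ)| * (τ:ℝ) / (A0:ℝ)) * ((A1:ℝ) * |(q1:ℝ)|)⁻¹) := by
                refine mul_le_mul_of_nonneg_left
                  (mul_le_mul_of_nonneg_right hMr (by positivity)) (by nlinarith)
            _ = 4 * (τ:ℝ) * ((τ:ℝ) - 1) * β / (A0:ℝ) := by
                field_simp
  have bndD : ∑ q ∈ S0 ×ˢ S1, volume (B q)
      ≤ ENNReal.ofReal (8 * ((τ : ℝ) - 1) * β * ((Q1 : ℝ) * τ / A0)) := by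
    rw [Finset.sum_product_right]
    calc ∑ q1 ∈ S1, ∑ q0 ∈ S0, volume (B (q0, q1))
        ≤ ∑ _q1 ∈ S1, ENNReal.ofReal (4 * (τ:ℝ) * ((τ:ℝ) - 1) * β / (A0:ℝ)) :=
          Finset.sum_le_sum innerD
      _ = S1.card • ENNReal.ofReal (4 * (τ:ℝ) * ((τ:ℝ) - 1) * β / (A0:ℝ)) := Finset.sum_const _
      _ ≤ ENNReal.ofReal (8 * ((τ : ℝ) - 1) * β * ((Q1 : ℝ) * τ / A0)) := by
          rw [hcard1, nsmul_eq_mul, ← ENNReal.ofReal_natCast, ← ENNReal.ofReal_mul (Nat.cast_nonneg _)]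
          refine ENNReal.ofReal_le_ofReal (le_of_eq ?_)
          push_cast
          field_simp
          ring
  -- combine via min cases
  rcases min_cases (min ((Q1:ℝ) * Q0 / A1) ((Q0:ℝ) * Q1 / A0))
      (min ((Q0:ℝ) * τ / A1) ((Q1:ℝ) * τ / A0)) with ⟨h, -⟩ | ⟨h, -⟩ <;> rw [h]
  · rcases min_cases ((Q1:ℝ) * Q0 / A1) ((Q0:ℝ) * Q1 / A0) with ⟨h2, -⟩ | ⟨h2, -⟩ <;> rw [h2]
    · exact bndA
    · exact bndB
  · rcases min_cases ((Q0:ℝ) * τ / A1) ((Q1:ℝ) * τ / A0) with ⟨h2, -⟩ | ⟨h2, -⟩ <;> rw [h2]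
    · exact bndC
    · exact bndD
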